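/- Let G be a Hausdorff locally compact second countable étale groupoid and let a ∈ C*_r(G) be such that its open support S = {γ : a(γ) ≠ 0} is a bisection of G. Then a belongs to the normalizer N(C₀(G⁽⁰⁾)) in C*_r(G), and for every b ∈ C₀(G⁽⁰⁾) and every unit x ∈ s(S), one has (a* b a)(x) = (a* a)(x) · b(α_S(x)), where α_S is the partial homeomorphism induced by S. -/

import Mathlib

/-- A (Hausdorff-agnostic) étale topological groupoid, presented with total
source/range/inverse maps `G → G` (units are the common fixed points) and a
globally defined multiplication whose groupoid axioms are required only on
composable pairs.  The étale condition is expressed by: `src` is a continuous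
open map which is locally injective, and the unit space is open. -/
structure EtaleGroupoid (G : Type*) [TopologicalSpace G] where
  src : G → G
  rng : G → G
  inv : G → G
  mul : G → G → G
  src_src : ∀ γ, src (src γ) = src γ
  rng_src : ∀ γ, rng (src γ) = src γ
  src_rng : ∀ γ, src (rng γ) = rng γ
  rng_rng : ∀ γ, rng (rng γ) = rng γ
  src_inv : ∀ γ, src (inv γ) = rng γ
  rng_inv : ∀ γ, rng (inv γ) = src γ
  inv_inv : ∀ γ, inv (inv γ) = γ
  src_mul : ∀ γ δ, src γ = rng δ → src (mul γ δ) = src δ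
  rng_mul : ∀ γ δ, src γ = rng δ → rng (mul γ δ) = rng γ
  mul_assoc' : ∀ γ δ ε, src γ = rng δ → src δ = rng ε →
    mul (mul γ δ) ε = mul γ (mul δ ε)
  mul_src : ∀ γ, mul γ (src γ) = γ
  rng_mul_self : ∀ γ, mul (rng γ) γ = γ
  inv_mul : ∀ γ, mul (inv γ) γ = src γ
  mul_inv : ∀ γ, mul γ (inv γ) = rng γ
  continuous_src : Continuous src
  continuous_rng : Continuous rng
  continuous_inv : Continuous inv
  continuous_mul : Continuous fun p : {p : G × G // src p.1 = rng p.2} => mul p.1.1 p.1.2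
  isOpenMap_src : IsOpenMap src
  locallyInjOn_src : ∀ γ : G, ∃ U : Set G, IsOpen U ∧ γ ∈ U ∧ Set.InjOn src U
  isOpen_units : IsOpen {γ : G | src γ = γ}

namespace EtaleGroupoid

variable {G : Type*} [TopologicalSpace G] (gr : EtaleGroupoid G)

/-- The unit space `G⁽⁰⁾`. -/
def units : Set G := {γ : G | gr.src γ = γ}

/-- The isotropy bundle `G' = {γ : r γ = s γ}`. -/
def isotropy : Set G := {γ : G | gr.rng γ = gr.src γ}

/-- A bisection: a set on which both the range and the source map are injective. -/
def IsBisection (S : Set G) : Prop := Set.InjOn gr.rng S ∧ Set.InjOn gr.src S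

end EtaleGroupoid

/-- A realization of the reduced C*-algebra `C*_r(G)` of an étale groupoid:
a C*-algebra `A` whose elements are faithfully represented as continuous
functions on `G`, with convolution product, the usual involution, and
containing (the extensions by zero of) all of `C₀(G⁽⁰⁾)`. -/
structure ReducedRep (G : Type*) [TopologicalSpace G] (gr : EtaleGroupoid G)
    (A : Type*) [NormedRing A] [StarRing A] [NormedAlgebra ℂ A] where
  j : A →ₗ[ℂ] (G → ℂ)
  j_injective : Function.Injective j
  j_continuous : ∀ a : A, Continuous (j a)
  j_star : ∀ (a : A) (γ : G), j (star a) γ = starRingEnd ℂ (j a (gr.inv γ))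
  j_mul : ∀ (a b : A) (γ : G),
    j (a * b) γ = ∑' δ : {δ : G // gr.src δ = gr.src γ},
      j a (gr.mul γ (gr.inv δ.1)) * j b δ.1
  exists_c0 : ∀ h : G → ℂ, Continuous h → (∀ γ ∉ gr.units, h γ = 0) →
    (∀ ε : ℝ, 0 < ε → ∃ K : Set G, IsCompact K ∧ ∀ γ ∉ K, ‖h γ‖ < ε) →
    ∃ a : A, j a = h

/-- The canonical copy of `C₀(G⁽⁰⁾)` inside `C*_r(G)`: the elements whose open
support is contained in the unit space. -/
def unitSubalg {G : Type*} [TopologicalSpace G] {gr : EtaleGroupoid G}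
    {A : Type*} [NormedRing A] [StarRing A] [NormedAlgebra ℂ A]
    (R : ReducedRep G gr A) : Set A :=
  {a : A | ∀ γ ∉ gr.units, R.j a γ = 0}

section Aux

variable {G : Type*} [TopologicalSpace G] (gr : EtaleGroupoid G)

lemma EtaleGroupoid.rng_unit {u : G} (hu : gr.src u = u) : gr.rng u = u := by
  have h := gr.rng_src u
  rwa [hu] at h

lemma EtaleGroupoid.inv_unit {u : G} (hu : gr.src u = u) : gr.inv u = u := by
  have h1 : gr.mul u (gr.inv u) = u := by rw [gr.mul_inv, gr.rng_unit hu]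
  have h2 : gr.mul u (gr.inv u) = gr.inv u := by
    have h := gr.rng_mul_self (gr.inv u)
    rwa [gr.rng_inv, hu] at h
  exact h2.symm.trans h1

/-- If `γ · δ⁻¹ = δ⁻¹` with `s δ = s γ`, then `γ` is a unit. -/
lemma EtaleGroupoid.cancel_unit {γ δ : G} (hs : gr.src δ = gr.src γ)
    (h : gr.mul γ (gr.inv δ) = gr.inv δ) : gr.src γ = γ := by
  have hc1 : gr.src γ = gr.rng (gr.inv δ) := by rw [gr.rng_inv, hs]
  have hc2 : gr.src (gr.inv δ) = gr.rng δ := gr.src_inv δ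
  have assoc := gr.mul_assoc' γ (gr.inv δ) δ hc1 hc2
  rw [h, gr.inv_mul, hs, gr.mul_src] at assoc
  exact assoc

variable {A : Type*} [NormedRing A] [StarRing A] [NormedAlgebra ℂ A]
  (R : ReducedRep G gr A)

/-- `(a*b)(η) = conj (a (η⁻¹)) · b (s η)` for `b` supported on units. -/
lemma j_star_mul_unit (a b : A) (hb : b ∈ unitSubalg R) (η : G) :
    R.j (star a * b) η =
      (starRingEnd ℂ) (R.j a (gr.inv η)) * R.j b (gr.src η) := by
  rw [R.j_mul]
  have key := tsum_eq_single (L := SummationFilter.unconditional _) (f := fun δ : {δ : G // gr.src δ = gr.src η} =>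
      R.j (star a) (gr.mul η (gr.inv δ.1)) * R.j b δ.1)
      ⟨gr.src η, gr.src_src η⟩ ?_
  · rw [key]
    dsimp only
    rw [gr.inv_unit (gr.src_src η), gr.mul_src, R.j_star]
  · rintro ⟨δ, hδ⟩ hne
    have hnu : δ ∉ gr.units := by
      intro hu
      exact hne (Subtype.ext (hu.symm.trans hδ))
    simp only [hb δ hnu, mul_zero]

/-- `(ab)(η) = a η · b (s η)` for `b` supported on units. -/
lemma j_mul_unit (a b : A) (hb : b ∈ unitSubalg R) (η : G) :
    R.j (a * b) η = R.j a η * R.j b (gr.src η) := by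
  rw [R.j_mul]
  have key := tsum_eq_single (L := SummationFilter.unconditional _) (f := fun δ : {δ : G // gr.src δ = gr.src η} =>
      R.j a (gr.mul η (gr.inv δ.1)) * R.j b δ.1)
      ⟨gr.src η, gr.src_src η⟩ ?_
  · rw [key]
    dsimp only
    rw [gr.inv_unit (gr.src_src η), gr.mul_src]
  · rintro ⟨δ, hδ⟩ hne
    have hnu : δ ∉ gr.units := by
      intro hu
      exact hne (Subtype.ext (hu.symm.trans hδ))
    simp only [hb δ hnu, mul_zero]

/-- `s x · γ = γ` when `s γ = s x` … actually `(s γ) acting on `γ⁻¹`. -/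
lemma mul_srcself_inv (γ : G) : gr.mul (gr.src γ) (gr.inv γ) = gr.inv γ := by
  have h := gr.rng_mul_self (gr.inv γ)
  rwa [gr.rng_inv] at h

end Aux

/-- If the open support of `a ∈ C*_r(G)` is a bisection `S`,
then `a` normalizes `C₀(G⁽⁰⁾)` and `(a* b a)(x) = (a* a)(x) · b(α_S x)` for
`b ∈ C₀(G⁽⁰⁾)` and `x ∈ s(S)` (with `x = s γ`, `α_S x = r γ` for `γ ∈ S`). -/
theorem stmt11 {G : Type*} [TopologicalSpace G] [T2Space G] [LocallyCompactSpace G]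
    [SecondCountableTopology G] (gr : EtaleGroupoid G)
    {A : Type*} [NormedRing A] [StarRing A] [CStarRing A] [NormedAlgebra ℂ A]
    [StarModule ℂ A] [CompleteSpace A]
    (R : ReducedRep G gr A) (a : A)
    (hbis : gr.IsBisection {γ : G | R.j a γ ≠ 0}) :
    (∀ b ∈ unitSubalg R,
      a * b * star a ∈ unitSubalg R ∧ star a * b * a ∈ unitSubalg R) ∧
    (∀ b ∈ unitSubalg R, ∀ γ : G, R.j a γ ≠ 0 →
      R.j (star a * b * a) (gr.src γ) =
        R.j (star a * a) (gr.src γ) * R.j b (gr.rng γ)) := by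
  constructor
  · intro b hb
    constructor
    · -- a * b * star a is supported on units
      intro γ hγ
      rw [R.j_mul]
      have hz : ∀ δ : {δ : G // gr.src δ = gr.src γ},
          R.j (a * b) (gr.mul γ (gr.inv δ.1)) * R.j (star a) δ.1 = 0 := by
        rintro ⟨δ, hδ⟩
        dsimp only
        by_contra hne
        have h1 : R.j (a * b) (gr.mul γ (gr.inv δ)) ≠ 0 := left_ne_zero_of_mul hne
        have h2 : R.j (star a) δ ≠ 0 := right_ne_zero_of_mul hne
        rw [j_mul_unit gr R a b hb] at h1
        have h1' : R.j a (gr.mul γ (gr.inv δ)) ≠ 0 := left_ne_zero_of_mul h1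
        rw [R.j_star] at h2
        have h2' : R.j a (gr.inv δ) ≠ 0 := fun h => h2 (by rw [h, map_zero])
        have hsrc : gr.src (gr.mul γ (gr.inv δ)) = gr.src (gr.inv δ) := by
          rw [gr.src_mul γ (gr.inv δ) (by rw [gr.rng_inv, hδ])]
        have heq : gr.mul γ (gr.inv δ) = gr.inv δ := hbis.2 h1' h2' hsrc
        exact hγ (gr.cancel_unit hδ heq)
      rw [tsum_congr hz, tsum_zero]
    · -- star a * b * a is supported on units
      intro γ hγ
      rw [R.j_mul]
      have hz : ∀ δ : {δ : G // gr.src δ = gr.src γ},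
          R.j (star a * b) (gr.mul γ (gr.inv δ.1)) * R.j a δ.1 = 0 := by
        rintro ⟨δ, hδ⟩
        dsimp only
        by_contra hne
        have h1 : R.j (star a * b) (gr.mul γ (gr.inv δ)) ≠ 0 := left_ne_zero_of_mul hne
        have h2 : R.j a δ ≠ 0 := right_ne_zero_of_mul hne
        rw [j_star_mul_unit gr R a b hb] at h1
        have h1' : R.j a (gr.inv (gr.mul γ (gr.inv δ))) ≠ 0 := by
          intro h
          exact left_ne_zero_of_mul h1 (by rw [h, map_zero])
        have hrng : gr.rng (gr.inv (gr.mul γ (gr.inv δ))) = gr.rng δ := by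
          rw [gr.rng_inv, gr.src_mul γ (gr.inv δ) (by rw [gr.rng_inv, hδ]), gr.src_inv]
        have heq : gr.inv (gr.mul γ (gr.inv δ)) = δ := hbis.1 h1' h2 hrng
        have heq' : gr.mul γ (gr.inv δ) = gr.inv δ := by
          have := congrArg gr.inv heq
          rwa [gr.inv_inv] at this
        exact hγ (gr.cancel_unit hδ heq')
      rw [tsum_congr hz, tsum_zero]
  · -- the formula
    intro b hb γ hγ
    have hss : gr.src γ = gr.src (gr.src γ) := (gr.src_src γ).symm
    have key1 : R.j (star a * b * a) (gr.src γ) =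
        (starRingEnd ℂ) (R.j a γ) * R.j b (gr.rng γ) * R.j a γ := by
      rw [R.j_mul]
      have key := tsum_eq_single (L := SummationFilter.unconditional _)
        (f := fun δ : {δ : G // gr.src δ = gr.src (gr.src γ)} =>
          R.j (star a * b) (gr.mul (gr.src γ) (gr.inv δ.1)) * R.j a δ.1)
        ⟨γ, hss⟩ ?_
      · rw [key]
        dsimp only
        rw [mul_srcself_inv, j_star_mul_unit gr R a b hb, gr.inv_inv, gr.src_inv]
      · rintro ⟨δ, hδ⟩ hne
        dsimp only
        rcases eq_or_ne (R.j a δ) 0 with h | h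
        · rw [h, mul_zero]
        · exfalso
          have hsd : gr.src δ = gr.src γ := by rw [hδ, gr.src_src]
          exact hne (Subtype.ext (hbis.2 h hγ hsd))
    have key2 : R.j (star a * a) (gr.src γ) =
        (starRingEnd ℂ) (R.j a γ) * R.j a γ := by
      rw [R.j_mul]
      have key := tsum_eq_single (L := SummationFilter.unconditional _)
        (f := fun δ : {δ : G // gr.src δ = gr.src (gr.src γ)} =>
          R.j (star a) (gr.mul (gr.src γ) (gr.inv δ.1)) * R.j a δ.1)
        ⟨γ, hss⟩ ?_
      · rw [key]
        dsimp only
        rw [mul_srcself_inv, R.j_star, gr.inv_inv]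
      · rintro ⟨δ, hδ⟩ hne
        dsimp only
        rcases eq_or_ne (R.j a δ) 0 with h | h
        · rw [h, mul_zero]
        · exfalso
          have hsd : gr.src δ = gr.src γ := by rw [hδ, gr.src_src]
          exact hne (Subtype.ext (hbis.2 h hγ hsd))
    rw [key1, key2]
    ring
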